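/- Let X be a real Banach space, x₀ ∈ X, R > 0, and let A satisfy the variable Lipschitz condition on B[x₀,R] with a continuous nonnegative function k on [0,R]. Set a = ‖A x₀ − x₀‖ and a₊(r) = a + ∫₀^r k(t) dt, and assume a₊ has a fixed point in [0,R]. Define r₀ = 0, r_{n+1} = a₊(r_n), and the successive approximations x₀ (the center of the ball), x_{n+1} = A x_n. Then for every n all x_n are well defined, ‖x_n − x₀‖ ≤ r_n ≤ R (so x_n ∈ B[x₀,R]), and ‖x_{n+1} − x_n‖ ≤ r_{n+1} − r_n. -/

import Mathlib

open Set Filter MeasureTheory Topology intervalIntegral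

private lemma seg_estimate {X : Type*} [NormedAddCommGroup X] [NormedSpace ℝ X]
    (x₀ : X) (R : ℝ) (A : X → X) (k : ℝ → ℝ)
    (hk_cont : ContinuousOn k (Set.Icc 0 R))
    (hk_nonneg : ∀ t ∈ Set.Icc (0 : ℝ) R, 0 ≤ k t)
    (hLip : ∀ x₁ x₂ : X, ∀ r : ℝ, ‖x₁ - x₀‖ ≤ r → ‖x₂ - x₀‖ ≤ r →
      0 < r → r ≤ R → ‖A x₁ - A x₂‖ ≤ k r * ‖x₁ - x₂‖)
    {s₀ s₁ : ℝ} (h0 : 0 ≤ s₀) (h01 : s₀ ≤ s₁) (h1R : s₁ ≤ R)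
    {y₁ y₂ : X} (hy₁ : ‖y₁ - x₀‖ ≤ s₀) (hy₂ : ‖y₂ - x₀‖ ≤ s₁)
    (hd : ‖y₂ - y₁‖ ≤ s₁ - s₀) :
    ‖A y₂ - A y₁‖ ≤ ∫ t in s₀..s₁, k t := by
  rcases eq_or_lt_of_le h01 with rfl | hlt
  · have h21 : y₂ = y₁ := by
      have h' : ‖y₂ - y₁‖ ≤ 0 := by simpa using hd
      have := le_antisymm h' (norm_nonneg _)
      simpa [sub_eq_zero] using norm_eq_zero.mp this
    simp [h21]
  set d : ℝ := s₁ - s₀ with hdd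
  have hdpos : 0 < d := sub_pos.mpr hlt
  set y : ℝ → X := fun t => y₁ + ((t - s₀) / d) • (y₂ - y₁) with hy
  have hys₀ : y s₀ = y₁ := by simp [hy]
  have hys₁ : y s₁ = y₂ := by
    simp [hy, ← hdd, div_self hdpos.ne']
  -- points on the segment
  have hball : ∀ t ∈ Icc s₀ s₁, ‖y t - x₀‖ ≤ t := by
    intro t ht
    have hθ0 : 0 ≤ (t - s₀) / d := div_nonneg (sub_nonneg.mpr ht.1) hdpos.le
    have : y t - x₀ = (y₁ - x₀) + ((t - s₀) / d) • (y₂ - y₁) := by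
      simp only [hy]; abel
    rw [this]
    calc ‖(y₁ - x₀) + ((t - s₀) / d) • (y₂ - y₁)‖
        ≤ ‖y₁ - x₀‖ + ‖((t - s₀) / d) • (y₂ - y₁)‖ := norm_add_le _ _
      _ ≤ s₀ + ((t - s₀) / d) * (s₁ - s₀) := by
          refine add_le_add hy₁ ?_
          rw [norm_smul, Real.norm_eq_abs, abs_of_nonneg hθ0]
          exact mul_le_mul_of_nonneg_left hd hθ0
      _ = t := by field_simp; rw [hdd]; ring
  have hstep : ∀ t t', s₀ ≤ t → t ≤ t' → t' ≤ s₁ →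
      ‖A (y t') - A (y t)‖ ≤ k t' * (t' - t) := by
    intro t t' ht htt' ht'
    rcases eq_or_lt_of_le htt' with rfl | hlt'
    · simp
    have ht'pos : 0 < t' := lt_of_le_of_lt (h0.trans ht) hlt'
    have hkt' : 0 ≤ k t' := hk_nonneg t' ⟨ht'pos.le, ht'.trans h1R⟩
    have hyy : ‖y t' - y t‖ ≤ t' - t := by
      have : y t' - y t = ((t' - t) / d) • (y₂ - y₁) := by
        have hc : (t' - s₀) / d - (t - s₀) / d = (t' - t) / d := by
          field_simp; ring
        simp only [hy]
        rw [add_sub_add_left_eq_sub, ← sub_smul, hc]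
      rw [this, norm_smul, Real.norm_eq_abs,
        abs_of_nonneg (div_nonneg (sub_nonneg.mpr htt') hdpos.le)]
      calc (t' - t) / d * ‖y₂ - y₁‖ ≤ (t' - t) / d * d := by
            exact mul_le_mul_of_nonneg_left hd (div_nonneg (sub_nonneg.mpr htt') hdpos.le)
        _ = t' - t := by field_simp
    calc ‖A (y t') - A (y t)‖ ≤ k t' * ‖y t' - y t‖ :=
          hLip (y t') (y t) t' (hball t' ⟨ht.trans htt', ht'⟩)
            ((hball t ⟨ht, htt'.trans ht'⟩).trans htt') ht'pos (ht'.trans h1R)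
      _ ≤ k t' * (t' - t) := mul_le_mul_of_nonneg_left hyy hkt'
  -- a uniform bound for k
  obtain ⟨C, hC⟩ := (isCompact_Icc.image_of_continuousOn hk_cont).isBounded.subset_closedBall 0
  have hCb : ∀ t ∈ Icc (0:ℝ) R, k t ≤ C := by
    intro t ht
    have := hC ⟨t, ht, rfl⟩
    rw [Metric.mem_closedBall, Real.dist_eq, sub_zero] at this
    exact (le_abs_self _).trans this
  set f : ℝ → ℝ := fun t => ‖A (y t) - A y₁‖ with hf
  -- f is Lipschitz on [s₀,s₁], hence continuous
  have hflip : ∀ t ∈ Icc s₀ s₁, ∀ t' ∈ Icc s₀ s₁, dist (f t) (f t') ≤ max C 0 * dist t t' := by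
    have key : ∀ t t', t ∈ Icc s₀ s₁ → t' ∈ Icc s₀ s₁ → t ≤ t' →
        dist (f t) (f t') ≤ max C 0 * dist t t' := by
      intro t t' ht ht' htt'
      rw [Real.dist_eq, Real.dist_eq, abs_sub_comm (f t), abs_sub_comm t t',
        abs_of_nonneg (sub_nonneg.mpr htt')]
      have h1 : |f t' - f t| ≤ ‖A (y t') - A (y t)‖ := by
        have := abs_norm_sub_norm_le (A (y t') - A y₁) (A (y t) - A y₁)
        simpa [hf] using this
      calc |f t' - f t| ≤ ‖A (y t') - A (y t)‖ := h1
        _ ≤ k t' * (t' - t) := hstep t t' ht.1 htt' ht'.2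
        _ ≤ max C 0 * (t' - t) := by
            refine mul_le_mul_of_nonneg_right ?_ (sub_nonneg.mpr htt')
            exact le_max_of_le_left (hCb t' ⟨(h0.trans ht'.1), ht'.2.trans h1R⟩)
    intro t ht t' ht'
    rcases le_total t t' with h | h
    · exact key t t' ht ht' h
    · rw [dist_comm (f t), dist_comm t]
      exact key t' t ht' ht h
  have hfcont : ContinuousOn f (Icc s₀ s₁) := by
    refine LipschitzOnWith.continuousOn (K := Real.toNNReal (max C 0)) ?_
    refine LipschitzOnWith.of_dist_le_mul fun t ht t' ht' => ?_
    rw [Real.coe_toNNReal _ (le_max_right C 0)]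
    exact hflip t ht t' ht'
  set B : ℝ → ℝ := fun u => ∫ t in s₀..u, k t with hB
  have hsub : ∀ u v : ℝ, u ∈ Icc s₀ s₁ → v ∈ Icc s₀ s₁ → uIcc u v ⊆ Icc (0:ℝ) R :=
    fun u v hu hv => Set.ordConnected_Icc.uIcc_subset
      ⟨h0.trans hu.1, hu.2.trans h1R⟩ ⟨h0.trans hv.1, hv.2.trans h1R⟩
  have hint : ∀ u v : ℝ, u ∈ Icc s₀ s₁ → v ∈ Icc s₀ s₁ → IntervalIntegrable k volume u v :=
    fun u v hu hv => (hk_cont.mono (hsub u v hu hv)).intervalIntegrable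
  have hBcont : ContinuousOn B (Icc s₀ s₁) := by
    have := intervalIntegral.continuousOn_primitive_interval'
      (hint s₀ s₁ (left_mem_Icc.mpr h01) (right_mem_Icc.mpr h01)) left_mem_uIcc
    rwa [uIcc_of_le h01] at this
  have hmemIcc : ∀ u : ℝ, 0 ≤ u → u < R → Icc (0:ℝ) R ∈ 𝓝[Set.Ici u] u := by
    intro u hu0 huR
    have hss : Set.Iio R ∩ Set.Ici u ⊆ Icc (0:ℝ) R :=
      fun z hz => ⟨hu0.trans hz.2, hz.1.le⟩
    exact Filter.mem_of_superset
      (Filter.inter_mem (mem_nhdsWithin_of_mem_nhds (Iio_mem_nhds huR)) self_mem_nhdsWithin) hss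
  have hB' : ∀ u ∈ Ico s₀ s₁, HasDerivWithinAt B (k u) (Set.Ici u) u := by
    intro u hu
    have hu0 : 0 ≤ u := h0.trans hu.1
    have huR : u < R := lt_of_lt_of_le hu.2 h1R
    have hmem : Icc (0:ℝ) R ∈ 𝓝[>] u :=
      nhdsWithin_mono u Ioi_subset_Ici_self (hmemIcc u hu0 huR)
    refine intervalIntegral.integral_hasDerivWithinAt_right
      (hint s₀ u (left_mem_Icc.mpr h01) ⟨hu.1, hu.2.le⟩) ?_ ?_
    · exact ⟨Icc 0 R, hmem, hk_cont.aestronglyMeasurable measurableSet_Icc⟩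
    · exact (hk_cont u ⟨hu0, huR.le⟩).mono_of_mem_nhdsWithin hmem
  have bound : ∀ u ∈ Ico s₀ s₁, ∀ q, k u < q → ∃ᶠ z in 𝓝[>] u, slope f u z < q := by
    intro u hu q hq
    have hu0 : 0 ≤ u := h0.trans hu.1
    have huR : u < R := lt_of_lt_of_le hu.2 h1R
    have hcw : ContinuousWithinAt k (Set.Ioi u) u :=
      (hk_cont u ⟨hu0, huR.le⟩).mono_of_mem_nhdsWithin
        (nhdsWithin_mono u Ioi_subset_Ici_self (hmemIcc u hu0 huR))
    have h1 : ∀ᶠ z in 𝓝[>] u, k z < q := hcw.eventually_lt_const hq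
    have h2 : ∀ᶠ z in 𝓝[>] u, z ∈ Ioc u s₁ :=
      Filter.eventually_mem_set.mpr (Ioc_mem_nhdsGT_of_mem ⟨le_rfl, hu.2⟩)
    refine ((h1.and h2).mono ?_).frequently
    rintro z ⟨hkz, hz1, hz2⟩
    have hzupos : 0 < z - u := sub_pos.mpr hz1
    have hfd : f z - f u ≤ ‖A (y z) - A (y u)‖ := by
      have := norm_sub_norm_le (A (y z) - A y₁) (A (y u) - A y₁)
      simpa [hf] using this
    have : f z - f u ≤ k z * (z - u) :=
      hfd.trans (hstep u z hu.1 hz1.le hz2)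
    rw [slope_def_field, div_lt_iff₀ hzupos]
    calc f z - f u ≤ k z * (z - u) := this
      _ < q * (z - u) := by exact mul_lt_mul_of_pos_right hkz hzupos
  have hfa : f s₀ ≤ B s₀ := by
    simp [hf, hB, hys₀]
  have := image_le_of_liminf_slope_right_le_deriv_boundary hfcont hfa hBcont hB' bound
    (right_mem_Icc.mpr h01)
  simpa [hf, hB, hys₁] using this

/-- The successive approximations `x_{n+1} = A x_n` starting from the center `x₀`
stay in the ball `B[x₀,R]` and are majorized by the scalar iterates
`r₀ = 0`, `r_{n+1} = a₊(r_n)`. -/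
theorem successive_approximations_majorized
    {X : Type*} [NormedAddCommGroup X] [NormedSpace ℝ X] [CompleteSpace X]
    (x₀ : X) (R : ℝ) (hR : 0 < R) (A : X → X) (k : ℝ → ℝ)
    (hk_cont : ContinuousOn k (Set.Icc 0 R))
    (hk_nonneg : ∀ t ∈ Set.Icc (0 : ℝ) R, 0 ≤ k t)
    (hLip : ∀ x₁ x₂ : X, ∀ r : ℝ, ‖x₁ - x₀‖ ≤ r → ‖x₂ - x₀‖ ≤ r →
      0 < r → r ≤ R → ‖A x₁ - A x₂‖ ≤ k r * ‖x₁ - x₂‖)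
    (a : ℝ) (ha : a = ‖A x₀ - x₀‖)
    (aplus : ℝ → ℝ) (haplus : ∀ r : ℝ, aplus r = a + ∫ t in (0 : ℝ)..r, k t)
    (hfix : ∃ ρ ∈ Set.Icc (0 : ℝ) R, aplus ρ = ρ)
    (r : ℕ → ℝ) (hr0 : r 0 = 0) (hr_succ : ∀ n : ℕ, r (n + 1) = aplus (r n))
    (x : ℕ → X) (hx0 : x 0 = x₀) (hx_succ : ∀ n : ℕ, x (n + 1) = A (x n)) :
    ∀ n : ℕ, ‖x n - x₀‖ ≤ r n ∧ r n ≤ R ∧ ‖x (n + 1) - x n‖ ≤ r (n + 1) - r n := by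
  obtain ⟨ρ, hρmem, hρfix⟩ := hfix
  have hρ0 : 0 ≤ ρ := hρmem.1
  have hρR : ρ ≤ R := hρmem.2
  have ha0 : 0 ≤ a := ha ▸ norm_nonneg _
  have hsub : ∀ u v : ℝ, u ∈ Set.Icc 0 R → v ∈ Set.Icc 0 R →
      Set.uIcc u v ⊆ Set.Icc (0:ℝ) R :=
    fun u v hu hv => Set.ordConnected_Icc.uIcc_subset hu hv
  have hint : ∀ u v : ℝ, u ∈ Set.Icc 0 R → v ∈ Set.Icc 0 R →
      IntervalIntegrable k MeasureTheory.volume u v :=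
    fun u v hu hv => (hk_cont.mono (hsub u v hu hv)).intervalIntegrable
  have hdiff : ∀ u v : ℝ, 0 ≤ u → u ≤ v → v ≤ R →
      aplus v - aplus u = ∫ t in u..v, k t := by
    intro u v hu huv hv
    have h1 : u ∈ Set.Icc (0:ℝ) R := ⟨hu, huv.trans hv⟩
    have h2 : v ∈ Set.Icc (0:ℝ) R := ⟨hu.trans huv, hv⟩
    have h0 : (0:ℝ) ∈ Set.Icc (0:ℝ) R := ⟨le_rfl, hR.le⟩
    rw [haplus, haplus]
    have := intervalIntegral.integral_add_adjacent_intervals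
      (hint 0 u h0 h1) (hint u v h1 h2)
    rw [← this]
    ring
  have hmono : ∀ u v : ℝ, 0 ≤ u → u ≤ v → v ≤ R → aplus u ≤ aplus v := by
    intro u v hu huv hv
    have hnn : (0:ℝ) ≤ ∫ t in u..v, k t := by
      refine intervalIntegral.integral_nonneg huv fun t ht => ?_
      exact hk_nonneg t ⟨hu.trans ht.1, ht.2.trans hv⟩
    linarith [hdiff u v hu huv hv]
  have hbase : ∀ n, 0 ≤ r n ∧ r n ≤ r (n + 1) ∧ r (n + 1) ≤ ρ := by
    intro n
    induction n with
    | zero =>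
      have hr1 : r 1 = a := by
        rw [hr_succ 0, hr0, haplus, intervalIntegral.integral_same, add_zero]
      refine ⟨le_of_eq hr0.symm, ?_, ?_⟩
      · rw [hr0, hr1]; exact ha0
      · rw [hr_succ 0, hr0, ← hρfix]
        exact hmono 0 ρ le_rfl hρ0 hρR
    | succ n ih =>
      obtain ⟨h0n, h01n, h1ρ⟩ := ih
      refine ⟨h0n.trans h01n, ?_, ?_⟩
      · rw [hr_succ n, hr_succ (n + 1)]
        exact hmono (r n) (r (n + 1)) h0n h01n (h1ρ.trans hρR)
      · rw [hr_succ (n + 1), ← hρfix]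
        exact hmono (r (n + 1)) ρ (h0n.trans h01n) h1ρ hρR
  have hrρ : ∀ n, r n ≤ ρ := by
    intro n
    cases n with
    | zero => rw [hr0]; exact hρ0
    | succ n => exact (hbase n).2.2
  have hrR : ∀ n, r n ≤ R := fun n => (hrρ n).trans hρR
  have hmain : ∀ n, ‖x n - x₀‖ ≤ r n ∧ ‖x (n + 1) - x n‖ ≤ r (n + 1) - r n := by
    intro n
    induction n with
    | zero =>
      constructor
      · rw [hx0, hr0, sub_self, norm_zero]
      · have hr1 : r 1 = a := by
          rw [hr_succ 0, hr0, haplus, intervalIntegral.integral_same, add_zero]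
        rw [hx_succ 0, hx0, hr1, hr0, sub_zero, ← ha]
    | succ n ih =>
      obtain ⟨h₁, h₂⟩ := ih
      have hxn1 : ‖x (n + 1) - x₀‖ ≤ r (n + 1) := by
        calc ‖x (n + 1) - x₀‖ = ‖(x (n + 1) - x n) + (x n - x₀)‖ := by
              rw [sub_add_sub_cancel]
          _ ≤ ‖x (n + 1) - x n‖ + ‖x n - x₀‖ := norm_add_le _ _
          _ ≤ (r (n + 1) - r n) + r n := add_le_add h₂ h₁
          _ = r (n + 1) := by ring
      refine ⟨hxn1, ?_⟩
      have h0n : 0 ≤ r n := (hbase n).1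
      have h01n : r n ≤ r (n + 1) := (hbase n).2.1
      have hseg := seg_estimate x₀ R A k hk_cont hk_nonneg hLip h0n h01n
        (hrR (n + 1)) h₁ hxn1 h₂
      have e3 : r (n + 2) - r (n + 1) = ∫ t in r n..r (n + 1), k t := by
        calc r (n + 2) - r (n + 1) = aplus (r (n + 1)) - aplus (r n) := by
              rw [hr_succ (n + 1), hr_succ n]
          _ = ∫ t in r n..r (n + 1), k t :=
              hdiff (r n) (r (n + 1)) h0n h01n (hrR (n + 1))
      rw [hx_succ (n + 1), hx_succ n, e3]
      rw [hx_succ n] at hseg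
      exact hseg
  intro n
  exact ⟨(hmain n).1, hrR n, (hmain n).2⟩
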